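/- arXiv:1510.05276 — 3 statements merged into one kernel-verified Lean document; each statement's English description precedes it below -/
import Mathlib

section
/- Let 𝕋 = {−2k : k ∈ ℕ} ∪ {2k + 1 : k ∈ ℕ} ⊆ ℝ, and let S ⊆ 𝕋 be unbounded above and unbounded below. If τ is a positive odd integer, then S is not a subset of S + τ. -/
theorem stmt_12
    (T : Set ℝ) (hT : T = {x : ℝ | (∃ k : ℕ, x = -(2 * k)) ∨ (∃ k : ℕ, x = 2 * k + 1)})
    (S : Set ℝ) (hS : S ⊆ T) (hAbove : ¬ BddAbove S) (hBelow : ¬ BddBelow S)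
    (τ : ℝ) (hτ : ∃ m : ℤ, 0 < τ ∧ τ = 2 * m + 1) :
    ¬ S ⊆ {y : ℝ | ∃ s ∈ S, y = s + τ} := by
  intro h
  obtain ⟨m, hτ0, hm⟩ := hτ
  rw [not_bddAbove_iff] at hAbove
  obtain ⟨x, hxS, hx⟩ := hAbove τ
  have hxT := hS hxS
  rw [hT] at hxT
  obtain ⟨k, hk⟩ | ⟨k, hk⟩ := hxT
  · have : (0:ℝ) ≤ 2 * k := by positivity
    linarith
  · obtain ⟨s, hsS, hsx⟩ := h hxS
    have hsT := hS hsS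
    rw [hT] at hsT
    have hs0 : 0 < s := by linarith
    obtain ⟨j, hj⟩ | ⟨j, hj⟩ := hsT
    · have : (0:ℝ) ≤ 2 * j := by positivity
      linarith
    · -- x = s + τ : 2k+1 = (2j+1) + (2m+1)
      have : (2 * (k:ℝ) + 1) = (2 * j + 1) + (2 * m + 1) := by
        rw [← hk, ← hj, ← hm]; exact hsx
      have : (2 * (k:ℤ) + 1) = (2 * j + 1) + (2 * m + 1) := by
        exact_mod_cast this
      omega
end

section
/- Let 𝕋 = {−2k : k ∈ ℕ} ∪ {2k + 1 : k ∈ ℕ} ⊆ ℝ. Then for every nonempty subset S ⊆ 𝕋 and every real number τ ≠ 0, S + τ ≠ S. In other words, 𝕋 contains no nonempty sub-time-scale that is invariant under a nonzero translation. -/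
theorem stmt_13
    (T : Set ℝ) (hT : T = {x : ℝ | (∃ k : ℕ, x = -(2 * k)) ∨ (∃ k : ℕ, x = 2 * k + 1)}) :
    ∀ S : Set ℝ, S ⊆ T → S.Nonempty → ∀ τ : ℝ, τ ≠ 0 →
      {y : ℝ | ∃ s ∈ S, y = s + τ} ≠ S := by
  intro S hST hS τ hτ heq
  -- characterization of T
  have memT : ∀ x ∈ T, ∃ m : ℤ, x = (m : ℝ) ∧ (Even m ↔ m ≤ 0) := by
    intro x hx
    rw [hT] at hx
    rcases hx with ⟨k, rfl⟩ | ⟨k, rfl⟩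
    · refine ⟨-(2 * k), by push_cast; ring, ?_⟩
      constructor
      · intro _; omega
      · intro _; exact ⟨-k, by ring⟩
    · refine ⟨2 * k + 1, by push_cast; ring, ?_⟩
      constructor
      · intro h; exfalso; rcases h with ⟨r, hr⟩; omega
      · intro h; omega
  obtain ⟨s, hs⟩ := hS
  have fwd : ∀ x ∈ S, x + τ ∈ S := by
    intro x hx
    rw [← heq]
    exact ⟨x, hx, rfl⟩
  have bwd : ∀ x ∈ S, x - τ ∈ S := by
    intro x hx
    rw [← heq] at hx
    obtain ⟨s', hs', rfl⟩ := hx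
    simpa using hs'
  have up : ∀ n : ℕ, s + n * τ ∈ S := by
    intro n
    induction n with
    | zero => simpa using hs
    | succ n ih =>
        have := fwd _ ih
        have h : s + (↑(n + 1) : ℝ) * τ = s + n * τ + τ := by push_cast; ring
        rw [h]; exact this
  have down : ∀ n : ℕ, s - n * τ ∈ S := by
    intro n
    induction n with
    | zero => simpa using hs
    | succ n ih =>
        have := bwd _ ih
        have h : s - (↑(n + 1) : ℝ) * τ = s - n * τ - τ := by push_cast; ring
        rw [h]; exact this
  have key : ∀ n : ℤ, s + n * τ ∈ S := by
    intro n
    rcases n.eq_nat_or_neg with ⟨m, rfl | rfl⟩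
    · exact_mod_cast up m
    · have := down m
      have h : s + ((-(m : ℤ) : ℤ) : ℝ) * τ = s - m * τ := by push_cast; ring
      rw [h]; exact this
  obtain ⟨a, ha, hpa⟩ := memT s (hST hs)
  obtain ⟨b, hb, _⟩ := memT (s + τ) (hST (fwd s hs))
  set t : ℤ := b - a with ht
  have hτt : τ = (t : ℝ) := by rw [ht]; push_cast; rw [← hb, ha]; ring
  have htne : t ≠ 0 := by
    intro h
    apply hτ
    rw [hτt, h]; norm_num
  have htt : 1 ≤ t * t := by
    rcases lt_or_gt_of_ne htne with h | h <;> nlinarith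
  -- generic contradiction maker
  have elem : ∀ c : ℤ, ∃ m : ℤ, m = a + 2 * c * (t * t) ∧ (Even m ↔ m ≤ 0) := by
    intro c
    have hx := key (2 * c * t)
    obtain ⟨m, hm, hpm⟩ := memT _ (hST hx)
    refine ⟨m, ?_, hpm⟩
    have : ((m : ℝ)) = ((a + 2 * c * (t * t) : ℤ) : ℝ) := by
      rw [← hm, ha, hτt]; push_cast; ring
    exact_mod_cast this
  by_cases hea : Even a
  · have ha0 : a ≤ 0 := hpa.mp hea
    obtain ⟨m, hm, hpm⟩ := elem (a.natAbs + 1)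
    have hme : Even m := by
      rw [hm]
      rcases hea with ⟨r, hr⟩
      exact ⟨r + (a.natAbs + 1) * (t * t), by rw [hr]; ring⟩
    have hpos : 0 < m := by
      rw [hm]
      have : (a.natAbs : ℤ) = -a := by omega
      nlinarith
    have := hpm.mp hme
    omega
  · have ha0 : 0 < a := by
      by_contra h
      exact hea (hpa.mpr (by omega))
    obtain ⟨m, hm, hpm⟩ := elem (-(a.natAbs + 1))
    have hm0 : m ≤ 0 := by
      rw [hm]
      have : (a.natAbs : ℤ) = a := by omega
      nlinarith
    have hme : Even m := hpm.mpr hm0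
    have : Even a := by
      have h2 : Even (2 * (-((a:ℤ).natAbs + 1)) * (t * t)) := ⟨-(a.natAbs + 1) * (t * t), by ring⟩
      have := hme
      rw [hm] at this
      rcases this with ⟨r, hr⟩
      rcases h2 with ⟨q, hq⟩
      exact ⟨r - q, by omega⟩
    exact hea this
end

section
/- There exists a closed subset 𝕋 of ℝ that is unbounded above and below, has uniformly bounded forward gaps (∀ t ∈ 𝕋, ∃ s ∈ 𝕋, t < s ≤ t + 5), and such that no nonempty subset S ⊆ 𝕋 satisfies S + τ = S for some nonzero real τ. -/
theorem stmt_14 :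
    ∃ T : Set ℝ, IsClosed T ∧ ¬ BddAbove T ∧ ¬ BddBelow T ∧
      (∀ t ∈ T, ∃ s ∈ T, t < s ∧ s ≤ t + 5) ∧
      ¬ ∃ S : Set ℝ, S ⊆ T ∧ S.Nonempty ∧ ∃ τ : ℝ, τ ≠ 0 ∧
          {y : ℝ | ∃ s ∈ S, y = s + τ} = S := by
  refine ⟨(fun n : ℤ => (n : ℝ)) '' {n : ℤ | (0 ≤ n ∧ Odd n) ∨ (n ≤ 0 ∧ Even n)},
    ?_, ?_, ?_, ?_, ?_⟩
  · exact Int.isClosedEmbedding_coe_real.isClosedMap _ (isClosed_discrete _)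
  · rintro ⟨x, hx⟩
    set k : ℤ := max 1 ⌈x⌉ with hk
    have hk1 : 1 ≤ k := le_max_left _ _
    have hmem : (↑(2 * k + 1) : ℝ) ∈
        (fun n : ℤ => (n : ℝ)) '' {n : ℤ | (0 ≤ n ∧ Odd n) ∨ (n ≤ 0 ∧ Even n)} :=
      ⟨2 * k + 1, Or.inl ⟨by omega, ⟨k, by ring⟩⟩, rfl⟩
    have := hx hmem
    have h2 : x ≤ ⌈x⌉ := Int.le_ceil x
    have h3 : (⌈x⌉ : ℝ) ≤ k := by exact_mod_cast le_max_right 1 ⌈x⌉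
    have h4 : (k : ℝ) < (↑(2 * k + 1) : ℝ) := by push_cast; linarith [(by exact_mod_cast hk1 : (1:ℝ) ≤ k)]
    linarith
  · rintro ⟨x, hx⟩
    set k : ℤ := max 1 ⌈-x⌉ with hk
    have hk1 : 1 ≤ k := le_max_left _ _
    have hmem : (↑(-(2 * k)) : ℝ) ∈
        (fun n : ℤ => (n : ℝ)) '' {n : ℤ | (0 ≤ n ∧ Odd n) ∨ (n ≤ 0 ∧ Even n)} :=
      ⟨-(2 * k), Or.inr ⟨by omega, ⟨-k, by ring⟩⟩, rfl⟩
    have := hx hmem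
    have h2 : -x ≤ ⌈-x⌉ := Int.le_ceil (-x)
    have h3 : (⌈-x⌉ : ℝ) ≤ k := by exact_mod_cast le_max_right 1 ⌈-x⌉
    have h4 : (↑(-(2 * k)) : ℝ) < -(k : ℝ) := by push_cast; linarith [(by exact_mod_cast hk1 : (1:ℝ) ≤ k)]
    linarith
  · rintro t ⟨n, hn, rfl⟩
    rcases hn with ⟨hn0, j, hj⟩ | ⟨hn0, j, hj⟩
    · exact ⟨(↑(n + 2) : ℝ), ⟨n + 2, Or.inl ⟨by omega, ⟨j + 1, by omega⟩⟩, rfl⟩,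
        by push_cast; constructor <;> linarith⟩
    · rcases eq_or_lt_of_le hn0 with h0 | h0
      · exact ⟨(1 : ℝ), ⟨1, Or.inl ⟨by omega, ⟨0, by ring⟩⟩, by norm_num⟩,
          by subst h0; norm_num⟩
      · exact ⟨(↑(n + 2) : ℝ), ⟨n + 2, Or.inr ⟨by omega, ⟨j + 1, by omega⟩⟩, rfl⟩,
          by push_cast; constructor <;> linarith⟩
  · rintro ⟨S, hST, ⟨s₀, hs₀⟩, τ, hτ, hEq⟩
    have fwd : ∀ s ∈ S, s + τ ∈ S := by
      intro s hs; rw [← hEq]; exact ⟨s, hs, rfl⟩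
    have bwd : ∀ s ∈ S, s - τ ∈ S := by
      intro s hs
      rw [← hEq] at hs
      obtain ⟨s', hs', h⟩ := hs
      have : s - τ = s' := by linarith
      rwa [this]
    -- τ is an integer
    obtain ⟨n₀, hn₀A, hn₀⟩ := hST hs₀
    obtain ⟨n₁, _, hn₁⟩ := hST (fwd s₀ hs₀)
    set m : ℤ := n₁ - n₀ with hm
    have hτm : τ = (m : ℝ) := by
      have h0 : ((n₀ : ℝ)) = s₀ := hn₀
      have h1 : ((n₁ : ℝ)) = s₀ + τ := hn₁
      rw [hm]; push_cast; linarith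
    have hm0 : m ≠ 0 := by
      intro h; rw [h] at hτm; simp at hτm; exact hτ hτm
    set B : Set ℤ := {n : ℤ | ((n : ℝ)) ∈ S} with hB
    have hn₀B : n₀ ∈ B := by
      show ((n₀ : ℝ)) ∈ S
      rw [show ((n₀ : ℝ)) = s₀ from hn₀]; exact hs₀
    have hBA : ∀ n ∈ B, (0 ≤ n ∧ Odd n) ∨ (n ≤ 0 ∧ Even n) := by
      intro n hn
      obtain ⟨a, ha, hae⟩ := hST hn
      have hae' : ((a : ℝ)) = ((n : ℝ)) := hae
      have : a = n := by exact_mod_cast hae'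
      rwa [this] at ha
    set p : ℤ := (m.natAbs : ℤ) with hp
    have hp0 : 0 < p := by simp only [hp]; omega
    have hBp : ∀ n ∈ B, n + p ∈ B ∧ n - p ∈ B := by
      intro n hn
      have h1 : n + m ∈ B := by
        have := fwd _ hn
        simpa [hB, hτm, Set.mem_setOf_eq] using this
      have h2 : n - m ∈ B := by
        have := bwd _ hn
        simpa [hB, hτm, Set.mem_setOf_eq] using this
      rcases le_or_gt 0 m with h | h
      · have : p = m := by omega
        rw [this]; exact ⟨h1, h2⟩
      · have : p = -m := by omega
        rw [this]; constructor
        · simpa [sub_eq_add_neg] using h2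
        · simpa [sub_eq_add_neg] using h1
    have key : ∀ k : ℕ, n₀ + k * p ∈ B ∧ n₀ - k * p ∈ B := by
      intro k
      induction k with
      | zero => constructor <;> simpa using hn₀B
      | succ k ih =>
        obtain ⟨ih1, ih2⟩ := ih
        constructor
        · have := (hBp _ ih1).1
          have h : n₀ + (↑(k + 1)) * p = n₀ + ↑k * p + p := by push_cast; ring
          rwa [h]
        · have := (hBp _ ih2).2
          have h : n₀ - (↑(k + 1)) * p = n₀ - ↑k * p - p := by push_cast; ring
          rwa [h]
    set K : ℕ := n₀.natAbs + 1 with hK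
    set q : ℤ := (K : ℤ) * p with hq
    have hqn : n₀.natAbs < q := by
      have : (K : ℤ) ≤ q := by
        have := hp0
        nlinarith [hp0, (by omega : (1:ℤ) ≤ K)]
      omega
    obtain ⟨ha, hb⟩ := key K
    obtain ⟨ha', _⟩ := key (K + 1)
    have hapos : 0 < n₀ + q := by omega
    have ha'pos : 0 < n₀ + ↑(K + 1) * p := by
      have : n₀ + ↑(K + 1) * p = n₀ + q + p := by push_cast [hq]; ring
      omega
    have hbneg : n₀ - q < 0 := by omega
    have hOa : Odd (n₀ + q) := by
      rcases hBA _ ha with ⟨_, h⟩ | ⟨h, _⟩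
      · exact h
      · omega
    have hOa' : Odd (n₀ + ↑(K + 1) * p) := by
      rcases hBA _ ha' with ⟨_, h⟩ | ⟨h, _⟩
      · exact h
      · omega
    have hEb : Even (n₀ - q) := by
      rcases hBA _ hb with ⟨h, _⟩ | ⟨_, h⟩
      · omega
      · exact h
    -- p is even since two consecutive positive elements are odd
    have hEp : Even p := by
      have := Odd.sub_odd hOa' hOa
      have h : n₀ + ↑(K + 1) * p - (n₀ + q) = p := by push_cast [hq]; ring
      rwa [h] at this
    have hEq' : Even q := hEp.mul_left _
    obtain ⟨x, hx⟩ := hOa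
    obtain ⟨y, hy⟩ := hEb
    obtain ⟨z, hz⟩ := hEq'
    omega
end
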